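/- Let v_f > 0, k_j > 0, 0 < v_c < v_f, k_c = (v_f - v_c)·k_j/v_f, and fix an average density K with k_c/4 < K ≤ 3k_c/4. Over the admissible set S_K = {(k1,k2) : 0 ≤ k1 ≤ k_j, 0 ≤ k2 ≤ k_j, k1 + k2 = 2K}, the cruising space-mean speed W(k1,k2) = (k1·G(k1) + k2·min{v_c, G(k2)})/(k1 + k2) attains its maximum value v_c + (v_f - v_c)·k_c/(8K), and this maximum is attained at (k1, k2) = (k_c/2, 2K - k_c/2). -/

import Mathlib

/-- Greenshields speed at density `k`, with free-flow speed `vf` and jam density `kj`. -/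
noncomputable def G (vf kj k : ℝ) : ℝ := vf * (1 - k / kj)

/-- Two-bin network space-mean speed where all vehicles in bin 2 cruise for parking
at desired cruising speed `vc` (worst case). -/
noncomputable def W (vf kj vc k1 k2 : ℝ) : ℝ :=
  (k1 * G vf kj k1 + k2 * min vc (G vf kj k2)) / (k1 + k2)

/-- Admissible two-bin configurations at network average density `K`. -/
def SK (kj K : ℝ) : Set (ℝ × ℝ) :=
  {p | 0 ≤ p.1 ∧ p.1 ≤ kj ∧ 0 ≤ p.2 ∧ p.2 ≤ kj ∧ p.1 + p.2 = 2 * K}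

/-- With cruising (worst case), for `kc/4 < K ≤ 3kc/4`, the maximum of `W` over `S_K`
is `vc + (vf - vc) kc / (8K)`, attained at `(kc/2, 2K - kc/2)`. -/
theorem cruising_upper_envelope_2 (vf kj vc K : ℝ)
    (hvf : 0 < vf) (hkj : 0 < kj) (hvc0 : 0 < vc) (hvcf : vc < vf)
    (hK0 : (vf - vc) * kj / vf / 4 < K) (hK : K ≤ 3 * ((vf - vc) * kj / vf) / 4) :
    (∀ p ∈ SK kj K,
        W vf kj vc p.1 p.2 ≤ vc + (vf - vc) * ((vf - vc) * kj / vf) / (8 * K)) ∧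
    (((vf - vc) * kj / vf / 2, 2 * K - (vf - vc) * kj / vf / 2) ∈ SK kj K ∧
      W vf kj vc ((vf - vc) * kj / vf / 2) (2 * K - (vf - vc) * kj / vf / 2) =
        vc + (vf - vc) * ((vf - vc) * kj / vf) / (8 * K)) := by
  set kc : ℝ := (vf - vc) * kj / vf with hkc_def
  have hvfvc : 0 < vf - vc := sub_pos.2 hvcf
  have hkc0 : 0 < kc := by positivity
  have hK' : 0 < K := lt_trans (by positivity) hK0
  have hkckj : kc ≤ kj := by
    rw [hkc_def, div_le_iff₀ hvf]; nlinarith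
  constructor
  · rintro ⟨k1, k2⟩ ⟨h1, h2, h3, h4, h5⟩
    simp only at h1 h2 h3 h4 h5 ⊢
    unfold W
    rw [h5, div_le_iff₀ (by positivity : (0:ℝ) < 2 * K)]
    have hmin : min vc (G vf kj k2) ≤ vc := min_le_left _ _
    have h2' : k2 * min vc (G vf kj k2) ≤ k2 * vc :=
      mul_le_mul_of_nonneg_left hmin h3
    have key : k1 * G vf kj k1 + k2 * vc ≤
        (vc + (vf - vc) * kc / (8 * K)) * (2 * K) := by
      unfold G
      have e1 : (vf - vc) * kc / (8 * K) * (2 * K) = (vf - vc) * kc / 4 := by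
        field_simp; ring
      have e2 : kc * vf = (vf - vc) * kj := by
        rw [hkc_def]; field_simp
      have e3 : k1 * (vf * (1 - k1 / kj)) * kj = k1 * vf * (kj - k1) := by
        field_simp
      have hsq : 0 ≤ (k1 * vf - (vf - vc) * kj / 2)^2 := sq_nonneg _
      rw [add_mul, e1]
      rw [← mul_le_mul_iff_of_pos_right (by positivity : (0:ℝ) < kj * vf)]
      have e3' : k1 * (vf * (1 - k1 / kj)) * (kj * vf) = k1 * vf * (kj - k1) * vf := by
        field_simp
      have e2' : (vf - vc) * kc / 4 * (kj * vf) = (vf - vc)^2 * kj^2 / 4 := by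
        rw [hkc_def]; field_simp
      rw [add_mul, add_mul, e3', e2']
      have h5' : k2 = 2 * K - k1 := by linarith
      subst h5'
      nlinarith [hsq]
    linarith
  · have hk2 : 2 * K - kc / 2 ≤ kc := by linarith
    have hk2' : 0 ≤ 2 * K - kc / 2 := by linarith
    refine ⟨⟨by positivity, by simp only; linarith, by simpa using hk2', by simp only; linarith, by ring⟩, ?_⟩
    have hGk2 : vc ≤ G vf kj (2 * K - kc / 2) := by
      have e : G vf kj (2 * K - kc / 2) - vc = vf / kj * (kc - (2 * K - kc / 2)) := by
        unfold G
        rw [hkc_def]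
        field_simp
        ring
      nlinarith [mul_nonneg (le_of_lt (div_pos hvf hkj)) (by linarith : (0:ℝ) ≤ kc - (2 * K - kc / 2))]
    unfold G at hGk2
    unfold W G
    rw [min_eq_left hGk2]
    rw [hkc_def]
    field_simp
    ring
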